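/- arXiv:2304.08397 — 2 statements merged into one kernel-verified Lean document; each statement's English description precedes it below -/
import Mathlib

section
/- If the graph Δ_t(n,k−1) is nonempty and not connected, then the graph Λ̃_t(n,k) (the subgraph of Λ_t(n,k) induced on the non-isolated codes) is not connected. -/
open Finset

variable (F : Type) [Field F] [Fintype F] [DecidableEq F]

/-- The dual code of a linear code `C ⊆ F^n`, with respect to the standard bilinear form. -/
def dualCode (n : ℕ) (C : Submodule F (Fin n → F)) : Submodule F (Fin n → F) where
  carrier := {v | ∀ c ∈ C, ∑ i, v i * c i = 0}
  zero_mem' := by intro c _; simp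
  add_mem' := by
    intro a b ha hb c hc
    simp only [Set.mem_setOf_eq] at *
    simp [add_mul, Finset.sum_add_distrib, ha c hc, hb c hc]
  smul_mem' := by
    intro r a ha c hc
    simp only [Set.mem_setOf_eq] at *
    simp [smul_eq_mul, mul_assoc, ← Finset.mul_sum, ha c hc]

/-- `goodCode F n t k C` says that `C` is an `[n,k]`-linear code over `F` whose dual minimum
distance is at least `t+1`, i.e. `C ∈ C_t(n,k)`. -/
def goodCode (n t k : ℕ) (C : Submodule F (Fin n → F)) : Prop :=
  Module.finrank F C = k ∧ ∀ v ∈ dualCode F n C, v ≠ 0 → t + 1 ≤ hammingNorm v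

/-- The Grassmann graph `Δ_t(n,k)` of codes in `C_t(n,k)`: two codes are adjacent iff
their intersection has dimension `k-1`. -/
def deltaGraph (n t k : ℕ) : SimpleGraph {C : Submodule F (Fin n → F) // goodCode F n t k C} where
  Adj X Y := X ≠ Y ∧ Module.finrank F ↥(X.1 ⊓ Y.1) = k - 1
  symm := by
    constructor
    rintro X Y ⟨h1, h2⟩
    exact ⟨h1.symm, by rwa [inf_comm]⟩
  loopless := by constructor; rintro X ⟨h1, _⟩; exact h1 rfl

/-- The graph `Λ_t(n,k)` of codes in `C_t(n,k)`: two codes are adjacent iff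
their intersection belongs to `C_t(n,k-1)`. -/
def lambdaGraph (n t k : ℕ) : SimpleGraph {C : Submodule F (Fin n → F) // goodCode F n t k C} where
  Adj X Y := X ≠ Y ∧ goodCode F n t (k-1) (X.1 ⊓ Y.1)
  symm := by
    constructor
    rintro X Y ⟨h1, h2⟩
    exact ⟨h1.symm, by rwa [inf_comm]⟩
  loopless := by constructor; rintro X ⟨h1, _⟩; exact h1 rfl

/-- A code `C ∈ C_t(n,k)` is isolated if no `(k-1)`-dimensional subspace of `C`
belongs to `C_t(n,k-1)`. -/
def IsIsolated (n t k : ℕ) (C : Submodule F (Fin n → F)) : Prop :=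
  ∀ D : Submodule F (Fin n → F), D ≤ C → ¬ goodCode F n t (k-1) D

/-- A monomial transformation of `F^n`: a permutation of the coordinates composed with
multiplication of each coordinate by a nonzero scalar. -/
def IsMonomial (n : ℕ) (ρ : (Fin n → F) ≃ₗ[F] (Fin n → F)) : Prop :=
  ∃ (σ : Equiv.Perm (Fin n)) (d : Fin n → F),
    (∀ i, d i ≠ 0) ∧ ∀ (v : Fin n → F) (i : Fin n), ρ v i = d i * v (σ i)

/-- `S_s(Ω)`: the set of points (`1`-dimensional subspaces) of `PG(k-1,q)` lying on a subspace
spanned by `s+1` points of `Ω`. (We represent any subspace by the corresponding submodule of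
`F^k`, and points of `PG(k-1,q)` by `1`-dimensional submodules.) -/
def satPoints (k s : ℕ) (Ω : Set (Submodule F (Fin k → F))) : Set (Submodule F (Fin k → F)) :=
  {P | ∃ T : Finset (Submodule F (Fin k → F)), ↑T ⊆ Ω ∧ T.card = s + 1 ∧ P ≤ T.sup id}

/-- A set `Ω` of points of `PG(k-1,q)` is `s`-saturating if `S_s(Ω)` is the whole point set of
`PG(k-1,q)` while (for `s ≥ 1`) `S_{s-1}(Ω)` is not. -/
def IsSaturating (k s : ℕ) (Ω : Set (Submodule F (Fin k → F))) : Prop :=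
  (∀ P : Submodule F (Fin k → F), Module.finrank F P = 1 → P ∈ satPoints F k s Ω) ∧
  (1 ≤ s → ¬ ∀ P : Submodule F (Fin k → F), Module.finrank F P = 1 → P ∈ satPoints F k (s-1) Ω)

lemma dualCode_anti {n : ℕ} {C D : Submodule F (Fin n → F)} (h : C ≤ D) :
    dualCode F n D ≤ dualCode F n C := fun v hv c hc => hv c (h hc)

/-- Any good code of dimension `k-1` extends to a good code of dimension `k`. -/
lemma extend_good {n k t : ℕ} (hk : 0 < k) (hkn : k ≤ n) {D : Submodule F (Fin n → F)}
    (hD : goodCode F n t (k - 1) D) :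
    ∃ X : Submodule F (Fin n → F), D ≤ X ∧ goodCode F n t k X := by
  have hDn : Module.finrank F D = k - 1 := hD.1
  have htop : Module.finrank F (⊤ : Submodule F (Fin n → F)) = n := by
    rw [finrank_top]; exact Module.finrank_fin_fun F
  have hlt : D ≠ ⊤ := by
    intro h
    rw [h, htop] at hDn
    omega
  obtain ⟨v, hv⟩ : ∃ v, v ∉ D := by
    by_contra h
    push_neg at h
    exact hlt (eq_top_iff.2 fun x _ => h x)
  have hv0 : v ≠ 0 := fun h => hv (h ▸ D.zero_mem)
  refine ⟨D ⊔ Submodule.span F {v}, le_sup_left, ?_, ?_⟩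
  · have hinf : D ⊓ Submodule.span F {v} = ⊥ := by
      rw [eq_bot_iff]
      intro x hx
      rw [Submodule.mem_inf] at hx
      obtain ⟨hxD, hxs⟩ := hx
      rw [Submodule.mem_span_singleton] at hxs
      obtain ⟨c, rfl⟩ := hxs
      rcases eq_or_ne c 0 with rfl | hc
      · simp
      · exact absurd (by simpa [smul_smul, inv_mul_cancel₀ hc] using D.smul_mem c⁻¹ hxD) hv
    have h1 := Submodule.finrank_sup_add_finrank_inf_eq D (Submodule.span F {v})
    rw [hinf, hDn, finrank_span_singleton hv0] at h1
    simp only [finrank_bot, add_zero] at h1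
    omega
  · exact fun w hw hw0 => hD.2 w (dualCode_anti F le_sup_left hw) hw0

/-- Two distinct `(k-1)`-dimensional subspaces of a `k`-dimensional space intersect
in dimension `k-2`. -/
lemma finrank_inf_of_le {n k : ℕ} {X D D' : Submodule F (Fin n → F)}
    (hX : Module.finrank F X = k)
    (hD : Module.finrank F D = k - 1) (hD' : Module.finrank F D' = k - 1)
    (hDX : D ≤ X) (hD'X : D' ≤ X) (hne : D ≠ D') (hk : 0 < k) :
    Module.finrank F ↥(D ⊓ D') = k - 1 - 1 := by
  have hsup : Module.finrank F ↥(D ⊔ D') = k := by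
    have h1 : D < D ⊔ D' := by
      refine lt_of_le_of_ne le_sup_left fun h => hne ?_
      have h2 : D' ≤ D := h ▸ le_sup_right
      exact (Submodule.eq_of_le_of_finrank_le h2 (by omega)).symm
    have h2 : Module.finrank F D < Module.finrank F ↥(D ⊔ D') :=
      Submodule.finrank_lt_finrank_of_lt h1
    have h3 : Module.finrank F ↥(D ⊔ D') ≤ Module.finrank F X :=
      Submodule.finrank_mono (sup_le hDX hD'X)
    omega
  have h4 := Submodule.finrank_sup_add_finrank_inf_eq D D'
  rw [hsup, hD, hD'] at h4
  omega

/-- Two good `(k-1)`-dimensional subspaces of a good `k`-dimensional code are reachable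
in the graph `Δ_t(n,k-1)`. -/
lemma delta_reach_of_le {n k t : ℕ} (hk : 0 < k) {X D D' : Submodule F (Fin n → F)}
    (hX : goodCode F n t k X)
    (hD : goodCode F n t (k - 1) D) (hD' : goodCode F n t (k - 1) D')
    (h1 : D ≤ X) (h2 : D' ≤ X) :
    (deltaGraph F n t (k - 1)).Reachable ⟨D, hD⟩ ⟨D', hD'⟩ := by
  rcases eq_or_ne D D' with rfl | hne
  · rfl
  · exact SimpleGraph.Adj.reachable
      ⟨fun h => hne (congrArg Subtype.val h),
       finrank_inf_of_le F hX.1 hD.1 hD'.1 h1 h2 hne hk⟩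

/-- If `Δ_t(n,k-1)` is nonempty and not connected, then the induced subgraph
`Λ̃_t(n,k)` of `Λ_t(n,k)` on the non-isolated codes is not connected. -/
theorem lambdaTilde_disconnected_of_delta_disconnected
    {n k t : ℕ} (hk : 0 < k) (hkn : k < n) (ht : t ≤ k)
    (hne : Nonempty {C : Submodule F (Fin n → F) // goodCode F n t (k-1) C})
    (hdis : ¬ (deltaGraph F n t (k-1)).Preconnected) :
    ¬ ((lambdaGraph F n t k).induce
        {X : {C : Submodule F (Fin n → F) // goodCode F n t k C} |
          ¬ IsIsolated F n t k X.1}).Preconnected := by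
  intro hcon
  apply hdis
  intro D1 D2
  obtain ⟨X1, hle1, hg1⟩ := extend_good F hk hkn.le D1.2
  obtain ⟨X2, hle2, hg2⟩ := extend_good F hk hkn.le D2.2
  have hni1 : ¬ IsIsolated F n t k X1 := fun h => h D1.1 hle1 D1.2
  have hni2 : ¬ IsIsolated F n t k X2 := fun h => h D2.1 hle2 D2.2
  let V1 : ↥{X : {C : Submodule F (Fin n → F) // goodCode F n t k C} |
      ¬ IsIsolated F n t k X.1} := ⟨⟨X1, hg1⟩, hni1⟩
  let V2 : ↥{X : {C : Submodule F (Fin n → F) // goodCode F n t k C} |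
      ¬ IsIsolated F n t k X.1} := ⟨⟨X2, hg2⟩, hni2⟩
  have key : ∀ (A B : ↥{X : {C : Submodule F (Fin n → F) // goodCode F n t k C} |
      ¬ IsIsolated F n t k X.1}),
      ((lambdaGraph F n t k).induce
        {X : {C : Submodule F (Fin n → F) // goodCode F n t k C} |
          ¬ IsIsolated F n t k X.1}).Reachable A B →
      ∀ (D D' : Submodule F (Fin n → F)) (hD : goodCode F n t (k-1) D)
        (hD' : goodCode F n t (k-1) D'),
        D ≤ A.1.1 → D' ≤ B.1.1 →
        (deltaGraph F n t (k-1)).Reachable ⟨D, hD⟩ ⟨D', hD'⟩ := by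
    intro A B h
    obtain ⟨w⟩ := h
    induction w with
    | @nil U =>
      intro D D' hD hD' hle hle'
      exact delta_reach_of_le F hk U.1.2 hD hD' hle hle'
    | @cons U C W hadj p ih =>
      intro D D' hD hD' hle hle'
      obtain ⟨hne, hgood⟩ : U.1 ≠ C.1 ∧ goodCode F n t (k-1) (U.1.1 ⊓ C.1.1) := hadj
      exact (delta_reach_of_le F hk U.1.2 hD hgood hle inf_le_left).trans
        (ih (U.1.1 ⊓ C.1.1) D' hgood hD' inf_le_right hle')
  exact key V1 V2 (hcon V1 V2) D1.1 D2.1 D1.2 D2.2 hle1 hle2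
end

section
/- Let C ∈ C_2(n,k) with basis b_1,...,b_k, and let P_i := (b_1(i),...,b_k(i)) ∈ F_q^k for i = 1,...,n be the columns of the corresponding generator matrix. Then C is isolated if and only if the 2-secants of the projective point set determined by the columns cover PG(k−1,q), i.e., every point of PG(k−1,q) lies in the projective span of two of the points ⟨P_i⟩, ⟨P_j⟩. -/
open Finset

variable (F : Type) [Field F] [Fintype F] [DecidableEq F]

lemma mem_dualCode {n : ℕ} (C : Submodule F (Fin n → F)) (v : Fin n → F) :
    v ∈ dualCode F n C ↔ ∀ c ∈ C, ∑ i, v i * c i = 0 := Iff.rfl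

lemma sum_single_mul {k : ℕ} (m : Fin k) (t : F) (g : Fin k → F) :
    ∑ l, (Pi.single m t : Fin k → F) l * g l = t * g m := by
  simp [Pi.single_apply, ite_mul]

lemma sum_sub_single_mul {k : ℕ} (m l0 : Fin k) (t : F) (h : Fin k → F) :
    ∑ l, ((Pi.single m (1:F) : Fin k → F) - t • (Pi.single l0 (1:F) : Fin k → F)) l * h l
      = h m - t * h l0 := by
  simp only [Pi.sub_apply, Pi.smul_apply, smul_eq_mul, sub_mul, Finset.sum_sub_distrib, mul_assoc]
  rw [← Finset.mul_sum, sum_single_mul, sum_single_mul]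
  ring

lemma scalar_of_orth {k : ℕ} (f g : Fin k → F) (hf : f ≠ 0)
    (h : ∀ x : Fin k → F, (∑ l, x l * f l) = 0 → (∑ l, x l * g l) = 0) :
    ∃ c : F, g = c • f := by
  obtain ⟨l0, hl0⟩ : ∃ l, f l ≠ 0 := by
    by_contra hc; push_neg at hc; exact hf (funext hc)
  refine ⟨(f l0)⁻¹ * g l0, funext fun m => ?_⟩
  have hx : ∑ l, ((Pi.single m (1:F) : Fin k → F)
      - (f m * (f l0)⁻¹) • (Pi.single l0 (1:F) : Fin k → F)) l * f l = 0 := by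
    rw [sum_sub_single_mul]
    field_simp
    simp
  have hg := h _ hx
  rw [sum_sub_single_mul] at hg
  have hgm : g m = f m * (f l0)⁻¹ * g l0 := sub_eq_zero.mp hg
  rw [Pi.smul_apply, smul_eq_mul, hgm]; ring

lemma sum_pair_support {n : ℕ} (i j : Fin n) (hij : i ≠ j) (v c : Fin n → F)
    (hv : ∀ m, m ≠ i → m ≠ j → v m = 0) :
    ∑ m, v m * c m = v i * c i + v j * c j := by
  have h0 : ∀ m ∈ Finset.univ, m ∉ ({i, j} : Finset (Fin n)) → v m * c m = 0 := by
    intro m _ hm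
    simp only [Finset.mem_insert, Finset.mem_singleton, not_or] at hm
    rw [hv m hm.1 hm.2, zero_mul]
  rw [← Finset.sum_subset (Finset.subset_univ _) h0, Finset.sum_pair hij]

/-- The standard-form functional `x ↦ ∑ l, x l * f l`. -/
def dotL (k : ℕ) (f : Fin k → F) : (Fin k → F) →ₗ[F] F where
  toFun x := ∑ l, x l * f l
  map_add' x y := by simp [add_mul, Finset.sum_add_distrib]
  map_smul' c x := by simp [Finset.mul_sum, mul_assoc]


/-- A code `C ∈ C_2(n,k)` with basis `b` is isolated iff every point of
`PG(k-1,q)` lies on the projective span of two of the points determined by the columns of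
the corresponding generator matrix. -/
theorem isolated_projective_iff_secants_cover
    {n k : ℕ} (hk : 1 < k) (hkn : k < n)
    (C : Submodule F (Fin n → F)) (hC : goodCode F n 2 k C)
    (b : Module.Basis (Fin k) F ↥C) :
    IsIsolated F n 2 k C ↔
      ∀ P : Submodule F (Fin k → F), Module.finrank F P = 1 →
        ∃ i j : Fin n, i ≠ j ∧
          P ≤ Submodule.span F
            {(fun l => (b l : Fin n → F) i), (fun l => (b l : Fin n → F) j)} := by
  classical
  obtain ⟨hCrank, hCdual⟩ := hC
  obtain ⟨Bm, hBinj, hrange, hBapp⟩ :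
      ∃ Bm : (Fin k → F) →ₗ[F] (Fin n → F), Function.Injective Bm ∧
        LinearMap.range Bm = C ∧
        ∀ (x : Fin k → F) (i : Fin n), Bm x i = ∑ l, x l * (b l : Fin n → F) i := by
    refine ⟨C.subtype.comp (b.equivFun.symm : (Fin k → F) ≃ₗ[F] C).toLinearMap, ?_, ?_, ?_⟩
    · exact C.injective_subtype.comp b.equivFun.symm.injective
    · rw [LinearMap.range_comp, LinearEquiv.range, Submodule.map_top, Submodule.range_subtype]
    · intro x i
      simp [LinearMap.comp_apply, Module.Basis.equivFun_symm_apply, AddSubmonoidClass.coe_finset_sum,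
        Finset.sum_apply]
  have hVk : Module.finrank F (Fin k → F) = k := by
    simp [Module.finrank_pi]
  constructor
  · -- isolated → secants cover
    intro hiso Pt hPt
    obtain ⟨f, hf0, hPf⟩ : ∃ f : Fin k → F, f ≠ 0 ∧ Pt = Submodule.span F {f} := by
      have hbot : Pt ≠ ⊥ := by
        intro h; rw [h] at hPt; simp at hPt
      obtain ⟨f, hfP, hf0⟩ := (Submodule.ne_bot_iff Pt).mp hbot
      refine ⟨f, hf0, ?_⟩
      have hle : Submodule.span F {f} ≤ Pt := by
        rw [Submodule.span_singleton_le_iff_mem]; exact hfP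
      exact (Submodule.eq_of_le_of_finrank_le hle
        (by rw [hPt, finrank_span_singleton hf0])).symm
    obtain ⟨l0, hl0⟩ : ∃ l, f l ≠ 0 := by
      by_contra hc; push_neg at hc; exact hf0 (funext hc)
    set φ := dotL F k f with hφ
    set W := LinearMap.ker φ with hWdef
    set Dm := W.map Bm with hDm
    have hDle : Dm ≤ C := by
      intro y hy
      obtain ⟨x, -, rfl⟩ := hy
      rw [← hrange]; exact ⟨x, rfl⟩
    have hφx0 : φ ((f l0)⁻¹ • (Pi.single l0 (1:F) : Fin k → F)) = 1 := by
      show ∑ l, ((f l0)⁻¹ • (Pi.single l0 (1:F) : Fin k → F)) l * f l = 1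
      simp only [Pi.smul_apply, smul_eq_mul, mul_assoc]
      rw [← Finset.mul_sum, sum_single_mul]
      field_simp
    have hφsurj : LinearMap.range φ = ⊤ := by
      rw [LinearMap.range_eq_top]
      intro c
      refine ⟨c • ((f l0)⁻¹ • (Pi.single l0 (1:F) : Fin k → F)), ?_⟩
      rw [map_smul, hφx0, smul_eq_mul, mul_one]
    have hWrank : Module.finrank F W = k - 1 := by
      have h1 := LinearMap.finrank_range_add_finrank_ker φ
      rw [hφsurj, finrank_top, Module.finrank_self, hVk, ← hWdef] at h1
      omega
    have hDrank : Module.finrank F Dm = k - 1 := by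
      rw [← hWrank]
      exact (LinearEquiv.finrank_eq (Submodule.equivMapOfInjective Bm hBinj W)).symm
    have hbad : ¬ ∀ v ∈ dualCode F n Dm, v ≠ 0 → 2 + 1 ≤ hammingNorm v :=
      fun h => hiso Dm hDle ⟨hDrank, h⟩
    push_neg at hbad
    obtain ⟨v, hvD, hv0, hlt⟩ := hbad
    obtain ⟨i, hvi⟩ : ∃ i, v i ≠ 0 := by
      by_contra h; push_neg at h; exact hv0 (funext h)
    obtain ⟨j, hji, hsupp⟩ : ∃ j, j ≠ i ∧ ∀ m, m ≠ i → m ≠ j → v m = 0 := by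
      by_cases hex : ∃ j, j ≠ i ∧ v j ≠ 0
      · obtain ⟨j, hji2, hvj⟩ := hex
        refine ⟨j, hji2, ?_⟩
        intro m hmi hmj
        by_contra hvm
        have hsub : ({i, j, m} : Finset (Fin n)) ⊆ ({l | v l ≠ 0} : Finset (Fin n)) := by
          intro l hl
          simp only [Finset.mem_insert, Finset.mem_singleton] at hl
          simp only [Finset.mem_filter, Finset.mem_univ, true_and]
          rcases hl with rfl | rfl | rfl <;> assumption
        have h3 : ({i, j, m} : Finset (Fin n)).card = 3 := by
          rw [Finset.card_insert_of_notMem (by simp [Ne.symm hji2, Ne.symm hmi]),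
            Finset.card_insert_of_notMem (by simp [Ne.symm hmj]), Finset.card_singleton]
        have hcard := Finset.card_le_card hsub
        rw [h3] at hcard
        have : hammingNorm v = ({l | v l ≠ 0} : Finset (Fin n)).card := rfl
        omega
      · push_neg at hex
        obtain ⟨j, hji⟩ : ∃ j : Fin n, j ≠ i := by
          rcases eq_or_ne i ⟨0, by omega⟩ with h | h
          · exact ⟨⟨1, by omega⟩, by simp [h, Fin.ext_iff]⟩
          · exact ⟨⟨0, by omega⟩, Ne.symm h⟩
        exact ⟨j, hji, fun m hmi _ => hex m hmi⟩
    -- the vector g = v i • P_i + v j • P_j is orthogonal to ker φ, hence a multiple of f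
    have horth : ∀ x : Fin k → F, (∑ l, x l * f l) = 0 →
        (∑ l, x l * (v i * (b l : Fin n → F) i + v j * (b l : Fin n → F) j)) = 0 := by
      intro x hx
      have hxW : x ∈ W := by
        rw [hWdef, LinearMap.mem_ker]; exact hx
      have hBxD : Bm x ∈ Dm := Submodule.mem_map_of_mem hxW
      have h0 := hvD _ hBxD
      rw [sum_pair_support F i j (Ne.symm hji) v _ hsupp, hBapp, hBapp] at h0
      calc ∑ l, x l * (v i * (b l : Fin n → F) i + v j * (b l : Fin n → F) j)
          = v i * (∑ l, x l * (b l : Fin n → F) i)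
            + v j * (∑ l, x l * (b l : Fin n → F) j) := by
            rw [Finset.mul_sum, Finset.mul_sum, ← Finset.sum_add_distrib]
            exact Finset.sum_congr rfl fun l _ => by ring
        _ = 0 := h0
    obtain ⟨c, hc⟩ := scalar_of_orth F f
      (fun l => v i * (b l : Fin n → F) i + v j * (b l : Fin n → F) j) hf0 horth
    rcases eq_or_ne c 0 with rfl | hcne
    · -- then v is a ≤2-weight vector in the dual of C, contradiction
      exfalso
      have hvC : v ∈ dualCode F n C := by
        intro c' hc'
        rw [← hrange] at hc'
        obtain ⟨x, rfl⟩ := hc'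
        rw [sum_pair_support F i j (Ne.symm hji) v _ hsupp, hBapp, hBapp]
        have : v i * (∑ l, x l * (b l : Fin n → F) i)
            + v j * (∑ l, x l * (b l : Fin n → F) j)
            = ∑ l, x l * (v i * (b l : Fin n → F) i + v j * (b l : Fin n → F) j) := by
          rw [Finset.mul_sum, Finset.mul_sum, ← Finset.sum_add_distrib]
          exact Finset.sum_congr rfl fun l _ => by ring
        rw [this]
        have hgl : ∀ l, v i * (b l : Fin n → F) i + v j * (b l : Fin n → F) j = 0 := by
          intro l
          have := congrFun hc l
          simpa using this
        simp [hgl]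
      have := hCdual v hvC hv0
      omega
    · refine ⟨i, j, Ne.symm hji, ?_⟩
      rw [hPf, Submodule.span_singleton_le_iff_mem]
      refine Submodule.mem_span_pair.mpr ⟨c⁻¹ * v i, c⁻¹ * v j, ?_⟩
      funext l
      have hl := congrFun hc l
      simp only [Pi.smul_apply, smul_eq_mul] at hl ⊢
      simp only [Pi.add_apply, Pi.smul_apply, smul_eq_mul]
      field_simp
      linear_combination hl
  · -- secants cover → isolated
    intro hcov D hDle hgood
    obtain ⟨hDrank, hDdual⟩ := hgood
    set W := D.comap Bm with hW
    have hmapW : W.map Bm = D := by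
      rw [Submodule.map_comap_eq, hrange, inf_eq_right.mpr hDle]
    have hWrank : Module.finrank F W = k - 1 := by
      rw [(LinearEquiv.finrank_eq (Submodule.equivMapOfInjective Bm hBinj W)), hmapW, hDrank]
    have hann : Module.finrank F W.dualAnnihilator = 1 := by
      have e : Module.finrank F ((Fin k → F) ⧸ W) = Module.finrank F W.dualAnnihilator :=
        (Subspace.quotEquivAnnihilator W).finrank_eq
      have hq2 := Submodule.finrank_quotient_add_finrank W
      rw [hVk] at hq2
      omega
    obtain ⟨ψ, hψmem, hψ0⟩ : ∃ ψ ∈ W.dualAnnihilator, ψ ≠ 0 := by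
      have hne : W.dualAnnihilator ≠ ⊥ := by
        intro h; rw [h] at hann; simp at hann
      exact (Submodule.ne_bot_iff _).mp hne
    have hψx : ∀ x : Fin k → F, ψ x = ∑ l, x l * ψ (Pi.single l (1:F)) := by
      intro x
      conv_lhs => rw [← Finset.univ_sum_single x]
      rw [map_sum]
      refine Finset.sum_congr rfl fun l _ => ?_
      have hsingle : (Pi.single l (x l) : Fin k → F) = x l • (Pi.single l (1:F) : Fin k → F) := by
        funext m
        simp [Pi.single_apply, mul_ite]
      rw [hsingle, map_smul, smul_eq_mul]
    set f : Fin k → F := fun l => ψ (Pi.single l (1:F)) with hfdef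
    have hf0 : f ≠ 0 := by
      intro h
      apply hψ0
      have h' : ∀ l, ψ (Pi.single l (1:F)) = 0 := fun l => congrFun h l
      refine LinearMap.ext fun x => ?_
      rw [hψx]
      simp [h']
    have hWf : ∀ x ∈ W, ∑ l, x l * f l = 0 := by
      intro x hx
      rw [← hψx]
      exact (Submodule.mem_dualAnnihilator ψ).mp hψmem x hx
    obtain ⟨i, j, hij, hle⟩ := hcov (Submodule.span F {f}) (finrank_span_singleton hf0)
    obtain ⟨a, a', hab⟩ := Submodule.mem_span_pair.mp (hle (Submodule.mem_span_singleton_self f))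
    set v : Fin n → F := fun m => if m = i then a else if m = j then a' else 0 with hvdef
    have hvi : v i = a := by simp [hvdef]
    have hvj : v j = a' := by simp [hvdef, Ne.symm hij]
    have hvsupp : ∀ m, m ≠ i → m ≠ j → v m = 0 := by
      intro m h1 h2; simp [hvdef, h1, h2]
    have hpt : ∀ l, a * (b l : Fin n → F) i + a' * (b l : Fin n → F) j = f l := by
      intro l
      have := congrFun hab l
      simpa using this
    have hvD : v ∈ dualCode F n D := by
      intro c hcD
      rw [← hmapW] at hcD
      obtain ⟨x, hxW, rfl⟩ := hcD
      rw [sum_pair_support F i j hij v _ hvsupp, hvi, hvj, hBapp, hBapp,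
        Finset.mul_sum, Finset.mul_sum, ← Finset.sum_add_distrib]
      have heq : ∀ l ∈ Finset.univ, a * (x l * (b l : Fin n → F) i)
          + a' * (x l * (b l : Fin n → F) j) = x l * f l := by
        intro l _
        rw [← hpt l]; ring
      rw [Finset.sum_congr rfl heq]
      exact hWf x hxW
    have hv0 : v ≠ 0 := by
      intro h
      have ha : a = 0 := by rw [← hvi, h]; rfl
      have ha' : a' = 0 := by rw [← hvj, h]; rfl
      apply hf0
      funext l
      rw [← hpt l, ha, ha']; simp
    have hnorm : hammingNorm v ≤ 2 := by
      have hsub : ({l | v l ≠ 0} : Finset (Fin n)) ⊆ ({i, j} : Finset (Fin n)) := by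
        intro m hm
        simp only [Finset.mem_filter, Finset.mem_univ, true_and] at hm
        by_contra hmem
        simp only [Finset.mem_insert, Finset.mem_singleton, not_or] at hmem
        exact hm (hvsupp m hmem.1 hmem.2)
      have hcard := Finset.card_le_card hsub
      have h2 : ({i, j} : Finset (Fin n)).card ≤ 2 :=
        le_trans (Finset.card_insert_le _ _) (by simp)
      have : hammingNorm v = ({l | v l ≠ 0} : Finset (Fin n)).card := rfl
      omega
    have := hDdual v hvD hv0
    omega
end
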